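/- Let q ≥ 1 be an integer and l an integer, and define G : ℂ → ℂ by G(s) := Σ_{(a,b)} e(a·l/q) · expZeta(b/q, s), the sum running over all pairs (a,b) with 1 ≤ a,b ≤ q and a·b ≡ 1 (mod q), where b/q is taken in ℝ/ℤ. Then: (i) for every s ∈ ℂ with Re s > 1, the series Σ_{n=1}^∞ Kl(l,n;q)/n^{s} converges absolutely and equals G(s); (ii) G is complex differentiable at every point s ≠ 1. -/

import Mathlib

open Complex

/-- `e(z) = exp(2πiz)`. -/
noncomputable def eC (z : ℂ) : ℂ := Complex.exp (2 * Real.pi * Complex.I * z)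

/-- The Kloosterman sum `Kl(m,n;c) = Σ_{x mod c, (x,c)=1} e((mx + nx*)/c)`,
where `x*` is the inverse of `x` modulo `c`. -/
noncomputable def Kl (m n : ℤ) (c : ℕ) : ℂ :=
  ∑ x ∈ Finset.filter (fun x => Nat.gcd x c = 1) (Finset.Icc 1 c),
    eC ((((m * x + n * ((((x : ZMod c))⁻¹.val : ℕ) : ℤ) : ℤ) : ℝ) / c : ℝ))

/-- `G(s) = Σ_{1 ≤ a,b ≤ q, ab ≡ 1 (q)} e(al/q) expZeta(b/q, s)`. -/
noncomputable def G (q : ℕ) (l : ℤ) (s : ℂ) : ℂ :=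
  ∑ a ∈ Finset.Icc 1 q, ∑ b ∈ Finset.Icc 1 q,
    if (a * b) % q = 1 % q then
      eC ((((a : ℤ) * l : ℤ) : ℝ) / q) *
        HurwitzZeta.expZeta (((b : ℝ) / q : ℝ) : UnitAddCircle) s
    else 0

/-- `v q x` is the least nonneg representative of the inverse of `x` mod `q`. -/
noncomputable def vq (q x : ℕ) : ℕ := ((x : ZMod q))⁻¹.val

lemma norm_eC_real (r : ℝ) : ‖eC (r : ℂ)‖ = 1 := by
  unfold eC
  rw [show (2 * (Real.pi : ℂ) * Complex.I * (r : ℂ)) = ((2 * Real.pi * r : ℝ) : ℂ) * Complex.I by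
    push_cast; ring]
  rw [Complex.norm_exp_ofReal_mul_I]

lemma norm_Kl_le (m n : ℤ) (q : ℕ) : ‖Kl m n q‖ ≤ q := by
  unfold Kl
  refine (norm_sum_le _ _).trans ?_
  have : ∀ x ∈ Finset.filter (fun x => Nat.gcd x q = 1) (Finset.Icc 1 q),
      ‖eC ((((m * x + n * ((((x : ZMod q))⁻¹.val : ℕ) : ℤ) : ℤ) : ℝ) / q : ℝ) : ℂ)‖ = 1 :=
    fun x _ => norm_eC_real _
  rw [Finset.sum_congr rfl this, Finset.sum_const, nsmul_eq_mul, mul_one]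
  have h1 : (Finset.filter (fun x => Nat.gcd x q = 1) (Finset.Icc 1 q)).card ≤ q := by
    calc _ ≤ (Finset.Icc 1 q).card := Finset.card_filter_le _ _
    _ = q := by rw [Nat.card_Icc]; omega
  exact_mod_cast h1

lemma G_eq (q : ℕ) (hq : 1 ≤ q) (l : ℤ) (s : ℂ) :
    G q l s = ∑ x ∈ Finset.filter (fun x => Nat.gcd x q = 1) (Finset.Icc 1 q),
      eC ((((x : ℤ) * l : ℤ) : ℝ) / q) *
        HurwitzZeta.expZeta (((vq q x : ℝ) / q : ℝ) : UnitAddCircle) s := by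
  haveI : NeZero q := ⟨by omega⟩
  rw [G, Finset.sum_filter]
  refine Finset.sum_congr rfl fun a _ => ?_
  have hcond : ∀ b : ℕ, (a * b) % q = 1 % q ↔ ((a : ZMod q) * (b : ZMod q) = 1) := by
    intro b
    rw [← ZMod.natCast_eq_natCast_iff' (a * b) 1 q]
    push_cast
    rfl
  by_cases h : Nat.gcd a q = 1
  · rw [if_pos h]
    have hunit : IsUnit (a : ZMod q) := (ZMod.isUnit_iff_coprime a q).mpr h
    set v : ℕ := vq q a with hv
    have hvlt : v < q := ZMod.val_lt _
    set b₀ : ℕ := if v = 0 then q else v with hb₀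
    have hb₀mem : b₀ ∈ Finset.Icc 1 q := by
      rw [Finset.mem_Icc]; rw [hb₀]; split <;> omega
    have hb₀cast : ((b₀ : ℕ) : ZMod q) = ((a : ZMod q))⁻¹ := by
      rw [hb₀]; split
      · rename_i h0
        rw [ZMod.natCast_self]
        exact ((ZMod.val_eq_zero _).mp h0).symm
      · exact ZMod.natCast_rightInverse _
    have hkey : ∀ b ∈ Finset.Icc 1 q, (a * b) % q = 1 % q ↔ b = b₀ := by
      intro b hb
      rw [hcond]
      constructor
      · intro hab
        have hbc : (b : ZMod q) = (b₀ : ZMod q) := by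
          rw [hb₀cast]
          calc (b : ZMod q) = ((a : ZMod q))⁻¹ * ((a : ZMod q) * b) := by
                rw [← mul_assoc, ZMod.inv_mul_of_unit _ hunit, one_mul]
          _ = ((a : ZMod q))⁻¹ := by rw [hab, mul_one]
        rw [ZMod.natCast_eq_natCast_iff'] at hbc
        rw [Finset.mem_Icc] at hb hb₀mem
        have hd : (q : ℤ) ∣ (b₀ : ℤ) - b := Nat.ModEq.dvd (show Nat.ModEq q b b₀ from hbc)
        have habs : |(b₀ : ℤ) - b| < q := by
          rw [abs_lt]
          omega
        have := Int.eq_zero_of_abs_lt_dvd hd habs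
        omega
      · rintro rfl
        rw [hb₀cast, ZMod.mul_inv_of_unit _ hunit]
    rw [Finset.sum_congr rfl (fun b hb => if_congr (hkey b hb) rfl rfl)]
    rw [Finset.sum_ite_eq' (Finset.Icc 1 q) b₀
      (fun b => eC ((((a : ℤ) * l : ℤ) : ℝ) / q) *
        HurwitzZeta.expZeta (((b : ℝ) / q : ℝ) : UnitAddCircle) s), if_pos hb₀mem]
    congr 2
    rw [hb₀]; split
    · rename_i h0
      rw [h0]
      have : ((q : ℝ) / q : ℝ) = ((0 : ℕ) : ℝ) / q + 1 := by
        field_simp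
        simp
      rw [this]
      exact_mod_cast AddCircle.coe_add_period 1 (((0:ℕ) : ℝ) / q)
    · rfl
  · rw [if_neg h]
    refine Finset.sum_eq_zero fun b _ => ?_
    rw [if_neg]
    intro hab
    rw [hcond] at hab
    exact h ((ZMod.isUnit_iff_coprime a q).mp (IsUnit.of_mul_eq_one _ hab))

lemma hasSum_Kl (q : ℕ) (hq : 1 ≤ q) (l : ℤ) {s : ℂ} (hs : 1 < s.re) :
    HasSum (fun n : ℕ => Kl l ((n : ℤ) + 1) q / (((n : ℕ) + 1 : ℕ) : ℂ) ^ s)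
      (∑ x ∈ Finset.filter (fun x => Nat.gcd x q = 1) (Finset.Icc 1 q),
        eC ((((x : ℤ) * l : ℤ) : ℝ) / q) *
          HurwitzZeta.expZeta (((vq q x : ℝ) / q : ℝ) : UnitAddCircle) s) := by
  have hq0 : (q : ℂ) ≠ 0 := Nat.cast_ne_zero.mpr (by omega)
  set S := Finset.filter (fun x => Nat.gcd x q = 1) (Finset.Icc 1 q) with hS
  set g : ℕ → ℂ := fun n => ∑ x ∈ S,
    eC ((((x : ℤ) * l : ℤ) : ℝ) / q) *
      (Complex.exp (2 * Real.pi * Complex.I * (((vq q x : ℝ) / q : ℝ) : ℂ) * n) / (n : ℂ) ^ s)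
    with hg
  have hgsum : HasSum g (∑ x ∈ S,
      eC ((((x : ℤ) * l : ℤ) : ℝ) / q) *
        HurwitzZeta.expZeta (((vq q x : ℝ) / q : ℝ) : UnitAddCircle) s) := by
    refine hasSum_sum fun x _ => ?_
    exact (HurwitzZeta.hasSum_expZeta_of_one_lt_re ((vq q x : ℝ) / q) hs).mul_left _
  have hg0 : g 0 = 0 := by
    have hs0 : s ≠ 0 := by rintro rfl; simp at hs; norm_num at hs
    simp [hg, Complex.zero_cpow hs0]
  have hshift : HasSum (fun n : ℕ => g (n + 1)) (∑ x ∈ S,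
      eC ((((x : ℤ) * l : ℤ) : ℝ) / q) *
        HurwitzZeta.expZeta (((vq q x : ℝ) / q : ℝ) : UnitAddCircle) s) := by
    rw [hasSum_nat_add_iff 1]
    simpa [hg0] using hgsum
  refine hshift.congr_fun fun n => ?_
  rw [hg]
  show Kl l ((n : ℤ) + 1) q / (((n : ℕ) + 1 : ℕ) : ℂ) ^ s = _
  rw [Kl, Finset.sum_div]
  refine Finset.sum_congr rfl fun x hx => ?_
  rw [← mul_div_assoc]
  congr 1
  · unfold eC
    rw [← Complex.exp_add]
    congr 1
    simp only [vq]
    push_cast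
    field_simp
theorem stmt5 (q : ℕ) (hq : 1 ≤ q) (l : ℤ) :
    (∀ s : ℂ, 1 < s.re →
      Summable (fun n : ℕ => ‖Kl l ((n : ℤ) + 1) q / (((n : ℕ) + 1 : ℕ) : ℂ) ^ s‖) ∧
      ∑' n : ℕ, Kl l ((n : ℤ) + 1) q / (((n : ℕ) + 1 : ℕ) : ℂ) ^ s = G q l s) ∧
    (∀ s : ℂ, s ≠ 1 → DifferentiableAt ℂ (G q l) s) := by
  constructor
  · intro s hs
    constructor
    · -- summability of norms
      have hmaj : Summable (fun n : ℕ => (q : ℝ) * ((n + 1 : ℝ) ^ s.re)⁻¹) := by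
        refine Summable.mul_left _ ?_
        have := (Real.summable_nat_rpow_inv (p := s.re)).mpr hs
        have := (summable_nat_add_iff (f := fun n : ℕ => ((n : ℝ) ^ s.re)⁻¹) 1).mpr this
        refine this.congr fun n => ?_
        push_cast
        ring_nf
      refine Summable.of_nonneg_of_le (fun n => norm_nonneg _) (fun n => ?_) hmaj
      rw [norm_div]
      have h1 : ‖(((n : ℕ) + 1 : ℕ) : ℂ) ^ s‖ = ((n : ℝ) + 1) ^ s.re := by
        rw [show ((((n : ℕ) + 1 : ℕ)) : ℂ) = ((((n : ℝ) + 1) : ℝ) : ℂ) by push_cast; ring]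
        rw [Complex.norm_cpow_eq_rpow_re_of_pos (by positivity)]
      rw [h1, ← div_eq_mul_inv]
      gcongr
      exact norm_Kl_le _ _ _
    · rw [(hasSum_Kl q hq l hs).tsum_eq, G_eq q hq l s]
  · intro s hs
    have hG : G q l = fun s => ∑ a ∈ Finset.Icc 1 q, ∑ b ∈ Finset.Icc 1 q,
        if (a * b) % q = 1 % q then
          eC ((((a : ℤ) * l : ℤ) : ℝ) / q) *
            HurwitzZeta.expZeta (((b : ℝ) / q : ℝ) : UnitAddCircle) s
        else 0 := rfl
    rw [hG]
    refine DifferentiableAt.fun_sum fun a _ => DifferentiableAt.fun_sum fun b _ => ?_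
    by_cases h : (a * b) % q = 1 % q
    · simp only [if_pos h]
      exact (HurwitzZeta.differentiableAt_expZeta _ s (Or.inl hs)).const_mul _
    · simp only [if_neg h]
      exact differentiableAt_const 0
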